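/- Let p be prime, let θ be defined by p^θ ∥ k, and let a be an integer with (a, p) = 1. Then W(p^t, a) = 0 whenever p ≥ 3 and t ≥ θ + 2, and also whenever p = 2 and t ≥ θ + 3, where W(q, a) = Σ_{r=1, (r,q)=1}^{q} e(a·r^k/q). -/

import Mathlib

/-- The complete exponential sum `W(q,a) = Σ_{r=1, (r,q)=1}^q e(a·r^k/q)`,
with `e(z) = e^{2πiz}`. -/
noncomputable def expSumW (k q : ℕ) (a : ℤ) : ℂ :=
  ∑ r ∈ (Finset.Icc 1 q).filter (fun r => Nat.gcd r q = 1),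
    Complex.exp (2 * Real.pi * Complex.I * ((a : ℂ) * (r : ℂ) ^ k / (q : ℂ)))

open Finset

lemma aux3pow (v : ℕ) (hv : 1 ≤ v) : v + 2 ≤ 3 ^ v := by
  induction v with
  | zero => omega
  | succ w ih =>
    rcases Nat.eq_zero_or_pos w with h | h
    · subst h; norm_num
    · have h3 := ih h
      have h4 : 3 ^ (w+1) = 3 * 3 ^ w := by ring
      omega

lemma choose_dvd (p θ n k : ℕ) (hp : p.Prime) (hθ1 : p ^ θ ∣ k) (hk0 : k ≠ 0)
    (hn : 1 ≤ n) (hn2 : p = 2 → 2 ≤ n) (e : ℕ) (he2 : 2 ≤ e) (hek : e ≤ k) :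
    p ^ (n + θ + 1) ∣ k.choose e * p ^ (n * e) := by
  set v := e.factorization p with hv
  have he0 : e ≠ 0 := by omega
  have hpv : p ^ v ∣ e := Nat.ordProj_dvd e p
  have hvle : p ^ v ≤ e := Nat.le_of_dvd (by omega) hpv
  have hsplit : n * e = n + (e - 1) * n := by
    obtain ⟨d, rfl⟩ : ∃ d, e = d + 2 := ⟨e - 2, by omega⟩
    have hd : d + 2 - 1 = d + 1 := rfl
    rw [hd]; ring
  -- key inequality
  have hineq : v + 1 ≤ (e - 1) * n := by
    rcases Nat.eq_zero_or_pos v with h0 | h1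
    · have hmul : (e-1) * 1 ≤ (e-1) * n := Nat.mul_le_mul_left _ hn
      omega
    · rcases eq_or_ne p 2 with rfl | hp3
      · have hn' : 2 ≤ n := hn2 rfl
        have h2v : v < 2 ^ v := Nat.lt_two_pow_self (n := v)
        have hmul : (e-1) * 2 ≤ (e-1) * n := Nat.mul_le_mul_left _ hn'
        omega
      · have hp3' : 3 ≤ p := by have := hp.two_le; omega
        have h3 : v + 2 ≤ 3 ^ v := aux3pow v h1
        have h3p : 3 ^ v ≤ p ^ v := Nat.pow_le_pow_left hp3' v
        have hmul : (e-1) * 1 ≤ (e-1) * n := Nat.mul_le_mul_left _ hn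
        omega
  -- p^θ ∣ choose * p^v
  have hid : k * (k-1).choose (e-1) = k.choose e * e := by
    obtain ⟨k', rfl⟩ : ∃ k', k = k' + 1 := ⟨k-1, by omega⟩
    obtain ⟨e', rfl⟩ : ∃ e', e = e' + 1 := ⟨e-1, by omega⟩
    simpa using (Nat.add_one_mul_choose_eq k' e')
  have hd1 : p ^ θ ∣ k.choose e * e := hid ▸ Dvd.dvd.mul_right hθ1 _
  have hecomp : e = p ^ v * (e / p ^ v) := (Nat.mul_div_cancel' hpv).symm
  have hcop : Nat.Coprime (p ^ θ) (e / p ^ v) :=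
    Nat.Coprime.pow_left _ (Nat.coprime_ordCompl hp he0)
  have hd2 : p ^ θ ∣ k.choose e * p ^ v := by
    apply Nat.Coprime.dvd_of_dvd_mul_right hcop
    calc p ^ θ ∣ k.choose e * e := hd1
      _ = k.choose e * p ^ v * (e / p ^ v) := by rw [mul_assoc, ← hecomp]
  -- conclude
  have hvne : v ≤ n * e := by
    have hvlt : v < p ^ v := Nat.lt_pow_self (n := v) hp.one_lt
    omega
  have hbig : p ^ (θ + (n * e - v)) ∣ k.choose e * p ^ v * p ^ (n * e - v) := by
    rw [pow_add]; exact Nat.mul_dvd_mul hd2 dvd_rfl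
  have heq : k.choose e * p ^ v * p ^ (n * e - v) = k.choose e * p ^ (n * e) := by
    rw [mul_assoc, ← pow_add]; congr 2; omega
  rw [heq] at hbig
  refine dvd_trans ?_ hbig
  exact pow_dvd_pow _ (by omega)
lemma congr_pow (p θ n k : ℕ) (hp : p.Prime) (hθ1 : p ^ θ ∣ k) (hk : 2 ≤ k)
    (hn : 1 ≤ n) (hn2 : p = 2 → 2 ≤ n) (u v : ℤ) :
    ((p : ℤ)) ^ (n + θ + 1) ∣
      (u + (p:ℤ) ^ n * v) ^ k - (u ^ k + (k:ℤ) * u ^ (k - 1) * ((p:ℤ) ^ n * v)) := by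
  obtain ⟨k2, rfl⟩ : ∃ k2, k = k2 + 2 := ⟨k - 2, by omega⟩
  rw [add_pow, Finset.sum_range_succ, Finset.sum_range_succ]
  have h1 : (k2 + 2).choose (k2 + 2) = 1 := Nat.choose_self _
  have h2 : (k2 + 2).choose (k2 + 1) = k2 + 2 := by
    simpa using Nat.choose_succ_self_right (k2 + 1)
  have e1 : k2 + 2 - (k2 + 2) = 0 := by omega
  have e2 : k2 + 2 - (k2 + 1) = 1 := by omega
  have e3 : k2 + 2 - 1 = k2 + 1 := by omega
  rw [h1, h2, e1, e2, e3]
  have key : ((p:ℤ)) ^ (n + θ + 1) ∣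
      ∑ j ∈ range (k2+1), u ^ j * ((p:ℤ)^n*v)^(k2+2-j) * ((k2+2).choose j : ℤ) := by
    apply Finset.dvd_sum
    intro j hj
    have hj' : j < k2 + 1 := Finset.mem_range.mp hj
    have hd := choose_dvd p θ n (k2+2) hp hθ1 (by omega) hn hn2 (k2+2-j) (by omega) (by omega)
    have hterm : u ^ j * ((p:ℤ)^n*v)^(k2+2-j) * ((k2+2).choose j : ℤ)
        = (((k2+2).choose (k2+2-j) * p ^ (n*(k2+2-j)) : ℕ) : ℤ) * (u^j * v^(k2+2-j)) := by
      rw [Nat.choose_symm (by omega : j ≤ k2 + 2)]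
      push_cast
      rw [mul_pow, ← pow_mul]
      ring
    rw [hterm]
    have hcast : ((p:ℤ)) ^ (n + θ + 1) ∣
        (((k2+2).choose (k2+2-j) * p ^ (n*(k2+2-j)) : ℕ) : ℤ) := by
      have := Int.natCast_dvd_natCast.mpr hd
      push_cast at this ⊢
      exact this
    exact hcast.mul_right _
  convert key using 1
  push_cast
  ring
lemma reindex (p n m : ℕ) (hp : p.Prime) (hn : 1 ≤ n) (hm : 1 ≤ m) (f : ℕ → ℂ) :
    ∑ r ∈ (range (p^(n+m))).filter (fun r => Nat.gcd r (p^(n+m)) = 1), f r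
    = ∑ u ∈ (range (p^n)).filter (fun u => Nat.gcd u p = 1),
        ∑ v ∈ range (p^m), f (u + p^n * v) := by
  have hp1 : 1 < p := hp.one_lt
  have hpn : 0 < p ^ n := Nat.pow_pos (by omega)
  have hpm : 0 < p ^ m := Nat.pow_pos (by omega)
  have hcop : ∀ r : ℕ, Nat.gcd r (p^(n+m)) = 1 ↔ ¬ p ∣ r := fun r =>
    (Nat.coprime_pow_right_iff (show 0 < n + m by omega) r p).trans
      (Nat.coprime_comm.trans (hp.coprime_iff_not_dvd))
  have hcop1 : ∀ u : ℕ, Nat.gcd u p = 1 ↔ ¬ p ∣ u := fun u =>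
    Nat.coprime_comm.trans (hp.coprime_iff_not_dvd)
  rw [← Finset.sum_product']
  apply Finset.sum_nbij' (i := fun r => (r % p^n, r / p^n)) (j := fun x => x.1 + p^n * x.2)
  · intro r hr
    simp only [Finset.mem_filter, Finset.mem_range, Finset.mem_product] at hr ⊢
    obtain ⟨hr1, hr2⟩ := hr
    refine ⟨⟨Nat.mod_lt _ hpn, ?_⟩, ?_⟩
    · rw [hcop1]
      rw [Nat.dvd_mod_iff (dvd_pow_self p (by omega))]
      exact (hcop r).mp hr2
    · rw [Nat.div_lt_iff_lt_mul hpn, ← pow_add, add_comm m n]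
      exact hr1
  · intro x hx
    simp only [Finset.mem_filter, Finset.mem_range, Finset.mem_product] at hx ⊢
    obtain ⟨⟨hu1, hu2⟩, hv⟩ := hx
    constructor
    · have h1 : x.1 + p^n * x.2 < p^n * (x.2 + 1) := by rw [Nat.mul_succ]; omega
      have h2 : p^n * (x.2 + 1) ≤ p^n * p^m := Nat.mul_le_mul_left _ hv
      rw [pow_add]; omega
    · rw [hcop]
      intro hdvd
      have hpd : p ∣ p^n * x.2 := Dvd.dvd.mul_right (dvd_pow_self p (by omega)) _
      have : p ∣ x.1 := (Nat.dvd_add_right hpd).mp (by rwa [add_comm] at hdvd)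
      exact (hcop1 x.1).mp hu2 this
  · intro r hr
    simp only [Nat.mod_add_div]
  · intro x hx
    simp only [Finset.mem_filter, Finset.mem_range, Finset.mem_product] at hx
    obtain ⟨⟨hu1, hu2⟩, hv⟩ := hx
    ext
    · simp [Nat.add_mul_mod_self_left, Nat.mod_eq_of_lt hu1]
    · simp [Nat.add_mul_div_left _ _ hpn, Nat.div_eq_of_lt hu1]
  · intro r hr
    simp only [Nat.mod_add_div]

lemma geom_zero (p : ℕ) (hp : p.Prime) (c : ℤ) (hpc : ¬ (p:ℤ) ∣ c) (m : ℕ) (hm : 1 ≤ m) :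
    ∑ v ∈ range (p^m), (Complex.exp (2 * Real.pi * Complex.I * (c / p)))^v = 0 := by
  set z := Complex.exp (2 * Real.pi * Complex.I * (c / p)) with hz
  have hp0 : (p:ℂ) ≠ 0 := by
    exact_mod_cast (Nat.cast_ne_zero (R := ℂ)).mpr hp.pos.ne'
  have h2 : (2 * Real.pi * Complex.I : ℂ) ≠ 0 := by
    simp [Real.pi_ne_zero, Complex.I_ne_zero]
  have hzne : z ≠ 1 := by
    intro h
    rw [hz, Complex.exp_eq_one_iff] at h
    obtain ⟨j, hj⟩ := h
    apply hpc
    have hcp : (c : ℂ) / p = j :=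
      mul_left_cancel₀ h2 (by rw [hj]; ring)
    have hc : (c : ℂ) = j * p := by field_simp at hcp; linear_combination hcp
    exact ⟨j, by exact_mod_cast (by linear_combination hc : (c:ℂ) = p * j)⟩
  have hzN : z ^ (p^m) = 1 := by
    rw [hz, ← Complex.exp_nat_mul]
    have he : (p^m : ℕ) * (2 * Real.pi * Complex.I * (c / p))
        = (c * p^(m-1) : ℤ) * (2 * Real.pi * Complex.I) := by
      push_cast
      have hpm : (p:ℂ)^m = (p:ℂ)^(m-1) * p := by
        rw [← pow_succ]; congr 1; omega
      rw [hpm]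
      field_simp
    rw [he]
    exact_mod_cast Complex.exp_int_mul_two_pi_mul_I _
  rw [geom_sum_eq hzne, hzN]
  simp

lemma icc_filter_eq (q : ℕ) (hq : 2 ≤ q) :
    (Finset.Icc 1 q).filter (fun r => Nat.gcd r q = 1)
    = (range q).filter (fun r => Nat.gcd r q = 1) := by
  ext r
  simp only [Finset.mem_filter, Finset.mem_Icc, Finset.mem_range]
  constructor
  · rintro ⟨⟨h1, h2⟩, h3⟩
    refine ⟨?_, h3⟩
    rcases Nat.lt_or_ge r q with h | h
    · exact h
    · have : r = q := by omega
      subst this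
      rw [Nat.gcd_self] at h3
      omega
  · rintro ⟨h1, h3⟩
    refine ⟨⟨?_, by omega⟩, h3⟩
    rcases Nat.eq_zero_or_pos r with rfl | h
    · rw [Nat.gcd_zero_left] at h3; omega
    · omega

/-- Let `p` be prime, `θ` defined by `p^θ ∥ k`, and `a` an integer with
`(a, p) = 1`. Then `W(p^t, a) = 0` whenever `p ≥ 3` and `t ≥ θ + 2`, and also whenever
`p = 2` and `t ≥ θ + 3`. -/
theorem stmt11 (k : ℕ) (hk : 2 ≤ k) (p : ℕ) (hp : p.Prime) (θ : ℕ)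
    (hθ1 : p ^ θ ∣ k) (hθ2 : ¬ p ^ (θ + 1) ∣ k)
    (a : ℤ) (ha : Int.gcd a p = 1) (t : ℕ)
    (ht : (3 ≤ p ∧ θ + 2 ≤ t) ∨ (p = 2 ∧ θ + 3 ≤ t)) :
    expSumW k (p ^ t) a = 0 := by
  have hp2 : 2 ≤ p := hp.two_le
  obtain ⟨n, rfl⟩ : ∃ n, t = n + (θ + 1) := ⟨t - (θ+1), by omega⟩
  have hn : 1 ≤ n := by omega
  have hn2 : p = 2 → 2 ≤ n := by intro h; subst h; omega
  -- k = p^θ * k'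
  obtain ⟨k', hkk⟩ := hθ1
  have hθ1' : p ^ θ ∣ k := ⟨k', hkk⟩
  have hpk' : ¬ p ∣ k' := by
    intro h
    obtain ⟨d, rfl⟩ := h
    exact hθ2 ⟨d, by rw [hkk]; ring⟩
  have hq2 : 2 ≤ p ^ (n + (θ + 1)) := by
    calc 2 = 2 ^ 1 := rfl
    _ ≤ p ^ (n + (θ+1)) := Nat.pow_le_pow_left hp2 1 |>.trans (Nat.pow_le_pow_right (by omega) (by omega))
  rw [expSumW, icc_filter_eq _ hq2, reindex p n (θ+1) hp hn (by omega)]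
  apply Finset.sum_eq_zero
  intro u hu
  simp only [Finset.mem_filter, Finset.mem_range] at hu
  obtain ⟨hult, hugcd⟩ := hu
  have hpu : ¬ p ∣ u := hp.coprime_iff_not_dvd.mp (Nat.coprime_comm.mp hugcd)
  -- setup
  set c : ℤ := a * (k' : ℤ) * (u : ℤ)^(k-1) with hc
  have hpP : Prime (p : ℤ) := Nat.prime_iff_prime_int.mp hp
  have hpa : ¬ (p:ℤ) ∣ a := by
    intro hd
    have h1 : (p:ℤ) ∣ (Int.gcd a p : ℤ) := Int.dvd_coe_gcd hd dvd_rfl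
    rw [ha] at h1
    have := Int.le_of_dvd one_pos h1
    omega
  have hpc : ¬ (p:ℤ) ∣ c := by
    intro hd
    rcases hpP.dvd_mul.mp hd with hd1 | hd2
    · rcases hpP.dvd_mul.mp hd1 with hda | hdk
      · exact hpa hda
      · exact hpk' (Int.natCast_dvd_natCast.mp hdk)
    · have := hpP.dvd_of_dvd_pow hd2
      exact hpu (Int.natCast_dvd_natCast.mp this)
  set z : ℂ := Complex.exp (2 * Real.pi * Complex.I * ((c:ℂ) / (p:ℂ))) with hz
  set C : ℂ := Complex.exp (2 * Real.pi * Complex.I *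
      ((a:ℂ) * (u:ℂ)^k / ((p:ℂ))^(n+(θ+1)))) with hC
  have hp0 : (p:ℂ) ≠ 0 := by
    exact_mod_cast (Nat.cast_ne_zero (R := ℂ)).mpr (by omega)
  have hterm : ∀ v ∈ range (p^(θ+1)),
      Complex.exp (2 * Real.pi * Complex.I *
        ((a:ℂ) * ((u + p^n * v : ℕ) : ℂ)^k / ((p^(n+(θ+1)) : ℕ) : ℂ))) = C * z ^ v := by
    intro v _
    obtain ⟨M, hM⟩ := congr_pow p θ n k hp hθ1' hk hn hn2 (u:ℤ) (v:ℤ)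
    have hM' : ((u:ℤ) + (p:ℤ)^n * v)^k
        = (u:ℤ)^k + (k:ℤ) * (u:ℤ)^(k-1) * ((p:ℤ)^n * v) + (p:ℤ)^(n+θ+1) * M := by
      linear_combination hM
    have hMC := congrArg (fun x : ℤ => (x : ℂ)) hM'
    push_cast at hMC
    have hrhs : C * z ^ v = Complex.exp (2 * Real.pi * Complex.I *
        ((a:ℂ) * (u:ℂ)^k / ((p:ℂ))^(n+(θ+1))) + v * (2 * Real.pi * Complex.I * ((c:ℂ) / (p:ℂ)))) := by
      rw [Complex.exp_add, hC, hz, ← Complex.exp_nat_mul]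
    rw [hrhs]
    rw [Complex.exp_eq_exp_iff_exists_int]
    refine ⟨a * M, ?_⟩
    have hkC : (k:ℂ) = (p:ℂ)^θ * (k':ℂ) := by exact_mod_cast congrArg (fun x : ℕ => (x:ℂ)) hkk
    push_cast
    rw [hMC, hkC, hc]
    push_cast
    field_simp
    ring
  rw [Finset.sum_congr rfl hterm, ← Finset.mul_sum,
    geom_zero p hp c hpc (θ+1) (by omega), mul_zero]
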